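/- arXiv:1008.4877 — 7 statements merged into one kernel-verified Lean document; each statement's English description precedes it below -/
import Mathlib

section
/- Let n ≥ 1, let Σ be a real symmetric 2n×2n matrix written in block form Σ = [[ΔXX, ΔXP], [ΔXPᵀ, ΔPP]] with n×n blocks (ΔXX and ΔPP symmetric), and let Ω = [[A, B], [-B, C]] where A and C are real antisymmetric n×n matrices and B is a real symmetric n×n matrix. If the complex Hermitian matrix Σ + iΩ is positive semidefinite, then for all indices 1 ≤ j, k ≤ n the following three inequalities hold: ΔXX_{jj}·ΔXX_{kk} ≥ (ΔXX_{jk})² + (A_{jk})², ΔPP_{jj}·ΔPP_{kk} ≥ (ΔPP_{jk})² + (C_{jk})², and ΔXX_{jj}·ΔPP_{kk} ≥ (ΔXP_{jk})² + (B_{jk})². -/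
open Matrix Complex
open scoped ComplexOrder

private lemma key2 (N : Matrix (Fin 2) (Fin 2) ℂ) (h : N.PosSemidef) :
    Complex.normSq (N 0 1) ≤ (N 0 0).re * (N 1 1).re := by
  have h10 : N 1 0 = starRingEnd ℂ (N 0 1) := by
    conv_lhs => rw [← h.1]
    simp [Matrix.conjTranspose_apply]
  set s : ℝ := Complex.normSq (N 0 1) with hs
  have hq : ∀ t : ℝ, 0 ≤ (N 0 0).re * (t * t) + (2 * s) * t + s * (N 1 1).re := by
    intro t
    have h0 := h.dotProduct_mulVec_nonneg ![(t : ℂ), starRingEnd ℂ (N 0 1)]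
    have hx : star (![(t : ℂ), starRingEnd ℂ (N 0 1)]) ⬝ᵥ
        N *ᵥ ![(t : ℂ), starRingEnd ℂ (N 0 1)]
        = (t : ℂ) * (t : ℂ) * N 0 0 + 2 * (t : ℂ) * (s : ℂ) + (s : ℂ) * N 1 1 := by
      simp only [dotProduct, Matrix.mulVec, dotProduct, Fin.sum_univ_two,
        Pi.star_apply, Matrix.cons_val_zero, Matrix.cons_val_one, Matrix.head_cons, h10, hs,
        Complex.star_def, Complex.conj_conj, Complex.conj_ofReal]
      have hz : N 0 1 * (starRingEnd ℂ) (N 0 1) = ((Complex.normSq (N 0 1) : ℝ) : ℂ) :=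
        Complex.mul_conj _
      linear_combination (2 * (t : ℂ) + N 1 1) * hz
    rw [hx] at h0
    have h2 : 0 ≤ t * t * (N 0 0).re + 2 * t * s + s * (N 1 1).re := by
      have := (Complex.le_def.mp h0).1
      simpa [Complex.add_re, Complex.mul_re] using this
    nlinarith [h2]
  have hd := discrim_le_zero hq
  have hs0 : 0 ≤ s := Complex.normSq_nonneg _
  have h00 : 0 ≤ (N 0 0).re := by
    have := (Complex.le_def.mp (h.dotProduct_mulVec_nonneg (Pi.single 0 1))).1
    simpa [dotProduct, Matrix.mulVec, Fin.sum_univ_two, Pi.single_apply] using this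
  have h11 : 0 ≤ (N 1 1).re := by
    have := (Complex.le_def.mp (h.dotProduct_mulVec_nonneg (Pi.single 1 1))).1
    simpa [dotProduct, Matrix.mulVec, Fin.sum_univ_two, Pi.single_apply] using this
  rw [discrim] at hd
  nlinarith [mul_nonneg h00 h11, sq_nonneg (s - (N 0 0).re * (N 1 1).re)]

private lemma key {m : Type*} [Fintype m] [DecidableEq m] {M : Matrix m m ℂ}
    (h : M.PosSemidef) (a b : m) :
    (M a b).re ^ 2 + (M a b).im ^ 2 ≤ (M a a).re * (M b b).re := by
  have := key2 (M.submatrix ![a, b] ![a, b]) (h.submatrix _)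
  simpa [Complex.normSq_apply, sq] using this

/-- If `Σ = [[ΔXX, ΔXP],[ΔXPᵀ, ΔPP]]` is real symmetric and
`Ω = [[A, B],[-B, C]]` with `A, C` antisymmetric and `B` symmetric,
and the complex Hermitian matrix `Σ + iΩ` is positive semidefinite,
then the generalized uncertainty inequalities hold entrywise. -/
theorem uncertainty_inequalities_of_posSemidef (n : ℕ) (hn : 1 ≤ n)
    (ΔXX ΔXP ΔPP A B C : Matrix (Fin n) (Fin n) ℝ)
    (hXX : ΔXXᵀ = ΔXX) (hPP : ΔPPᵀ = ΔPP)
    (hA : Aᵀ = -A) (hC : Cᵀ = -C) (hB : Bᵀ = B)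
    (hpos : ((Matrix.fromBlocks ΔXX ΔXP ΔXPᵀ ΔPP).map (fun x : ℝ => (x : ℂ))
        + Complex.I •
          ((Matrix.fromBlocks A B (-B) C).map (fun x : ℝ => (x : ℂ)))).PosSemidef) :
    ∀ j k : Fin n,
      ΔXX j j * ΔXX k k ≥ (ΔXX j k) ^ 2 + (A j k) ^ 2 ∧
      ΔPP j j * ΔPP k k ≥ (ΔPP j k) ^ 2 + (C j k) ^ 2 ∧
      ΔXX j j * ΔPP k k ≥ (ΔXP j k) ^ 2 + (B j k) ^ 2 := by
  intro j k
  refine ⟨?_, ?_, ?_⟩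
  · have := key hpos (Sum.inl j) (Sum.inl k)
    simp [Matrix.add_apply, Matrix.smul_apply, Matrix.map_apply, Matrix.fromBlocks_apply₁₁,
      Complex.add_re, Complex.add_im, Complex.mul_re, Complex.mul_im] at this
    linarith
  · have := key hpos (Sum.inr j) (Sum.inr k)
    simp [Matrix.add_apply, Matrix.smul_apply, Matrix.map_apply, Matrix.fromBlocks_apply₂₂,
      Complex.add_re, Complex.add_im, Complex.mul_re, Complex.mul_im] at this
    linarith
  · have := key hpos (Sum.inl j) (Sum.inr k)
    simp [Matrix.add_apply, Matrix.smul_apply, Matrix.map_apply, Matrix.fromBlocks_apply₁₂,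
      Matrix.fromBlocks_apply₁₁, Matrix.fromBlocks_apply₂₂,
      Complex.add_re, Complex.add_im, Complex.mul_re, Complex.mul_im] at this
    linarith
end

section
/- Let Σ be a real symmetric 2n×2n matrix written in block form Σ = [[ΔXX, ΔXP], [ΔXPᵀ, ΔPP]] with n×n blocks, let ε > 0, and let J be the standard symplectic 2n×2n matrix. If the complex Hermitian matrix Σ + i·ε·J is positive semidefinite, then for every index 1 ≤ j ≤ n one has the Robertson–Schrödinger type inequality ΔXX_{jj}·ΔPP_{jj} ≥ (ΔXP_{jj})² + ε². -/
open Matrix Complex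
open scoped ComplexOrder

/-- If `Σ = [[ΔXX, ΔXP],[ΔXPᵀ, ΔPP]]` is real symmetric, `ε > 0`, and the
complex Hermitian matrix `Σ + i·ε·J` is positive semidefinite (with
`J = [[0, I],[-I, 0]]` the standard symplectic matrix), then the
Robertson–Schrödinger inequalities hold. -/
theorem robertson_schroedinger_of_posSemidef (n : ℕ)
    (ΔXX ΔXP ΔPP : Matrix (Fin n) (Fin n) ℝ)
    (hXX : ΔXXᵀ = ΔXX) (hPP : ΔPPᵀ = ΔPP)
    (ε : ℝ) (hε : 0 < ε)
    (hpos : ((Matrix.fromBlocks ΔXX ΔXP ΔXPᵀ ΔPP).map (fun x : ℝ => (x : ℂ))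
        + (Complex.I * (ε : ℂ)) •
          ((Matrix.fromBlocks (0 : Matrix (Fin n) (Fin n) ℝ) 1 (-1) 0).map
            (fun x : ℝ => (x : ℂ)))).PosSemidef) :
    ∀ j : Fin n, ΔXX j j * ΔPP j j ≥ (ΔXP j j) ^ 2 + ε ^ 2 := by
  intro j
  have hsub := hpos.submatrix ![Sum.inl j, Sum.inr j]
  set a := ΔXX j j with ha_def
  set b := ΔPP j j with hb_def
  set s := ΔXP j j ^ 2 + ε ^ 2 with hs_def
  have hs : 0 < s := by positivity
  have ha : 0 ≤ a := by
    have h := hsub.dotProduct_mulVec_nonneg ![1, 0]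
    rw [Complex.le_def] at h
    obtain ⟨hre, -⟩ := h
    simpa [dotProduct, Matrix.mulVec, Fin.sum_univ_two, Matrix.submatrix_apply,
      Matrix.add_apply, Matrix.smul_apply, Matrix.map_apply, Matrix.one_apply,
      Complex.add_re, Complex.mul_re, Complex.mul_im, Complex.add_im] using hre
  have key : ∀ t : ℝ, 0 ≤ a * t^2 - 2*s*t + b * s := by
    intro t
    have h := hsub.dotProduct_mulVec_nonneg ![(t:ℂ), -((ΔXP j j : ℂ) - Complex.I * ε)]
    rw [Complex.le_def] at h
    obtain ⟨hre, -⟩ := h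
    simp [dotProduct, Matrix.mulVec, Fin.sum_univ_two, Matrix.submatrix_apply,
      Matrix.add_apply, Matrix.smul_apply, Matrix.map_apply, Matrix.one_apply,
      Complex.add_re, Complex.mul_re, Complex.mul_im, Complex.add_im, Complex.sub_re,
      Complex.sub_im, Complex.neg_re, Complex.neg_im] at hre
    simp only [hs_def, ha_def, hb_def]
    nlinarith [hre, sq_nonneg ε]
  have h1 := key b
  have h2 := key (s/(a+1))
  have ha1 : (0:ℝ) < a + 1 := by linarith
  have hne : (a+1) ≠ 0 := ne_of_gt ha1
  have heq : (a * (s/(a+1))^2 - 2*s*(s/(a+1)) + b * s) * (a+1)^2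
      = a*s^2 - 2*s^2*(a+1) + b*s*(a+1)^2 := by field_simp
  have h2' : 0 ≤ a*s^2 - 2*s^2*(a+1) + b*s*(a+1)^2 := by
    rw [← heq]; exact mul_nonneg h2 (by positivity)
  rw [ge_iff_le, ← sub_nonneg]
  by_contra hneg
  push_neg at hneg
  rw [← sub_pos] at hneg
  have hb : b ≤ 0 := by nlinarith
  nlinarith [mul_pos hs hs, mul_nonneg (mul_pos hs hs).le ha,
    mul_nonneg (mul_nonneg hs.le (neg_nonneg.mpr hb)) (sq_nonneg (a+1))]
end

section
/- Let Σ be a real symmetric 2n×2n matrix and Ω an invertible real antisymmetric 2n×2n matrix. If the complex Hermitian matrix Σ + iΩ is positive semidefinite, then Σ is positive definite. -/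
open Matrix Complex
open scoped ComplexOrder

/-- If `Σ` is real symmetric, `Ω` is an invertible real antisymmetric matrix,
and the complex Hermitian matrix `Σ + iΩ` is positive semidefinite,
then `Σ` is positive definite. -/
theorem posDef_of_posSemidef_add_I_smul (n : ℕ)
    (S Ω : Matrix (Fin n ⊕ Fin n) (Fin n ⊕ Fin n) ℝ)
    (hSsym : Sᵀ = S) (hΩinv : IsUnit Ω) (hΩanti : Ωᵀ = -Ω)
    (hpos : (S.map (fun x : ℝ => (x : ℂ))
        + Complex.I • (Ω.map (fun x : ℝ => (x : ℂ)))).PosSemidef) :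
    S.PosDef := by
  rw [Matrix.posDef_iff_dotProduct_mulVec]
  constructor
  · rw [Matrix.IsHermitian, conjTranspose, hSsym]
    ext i j
    simp
  · intro x hx
    set z : (Fin n ⊕ Fin n) → ℂ := fun i => ((x i : ℝ) : ℂ) with hz
    have hstarz : star z = z := by
      funext i; simp [hz]
    have hSz : (S.map (fun t : ℝ => (t : ℂ))) *ᵥ z
        = fun i => (((S *ᵥ x) i : ℝ) : ℂ) := by
      funext i
      simp [Matrix.mulVec, dotProduct, hz, Matrix.map_apply]
    have hΩz : (Ω.map (fun t : ℝ => (t : ℂ))) *ᵥ z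
        = fun i => (((Ω *ᵥ x) i : ℝ) : ℂ) := by
      funext i
      simp [Matrix.mulVec, dotProduct, hz, Matrix.map_apply]
    -- antisymmetry kills the Ω quadratic form
    have hΩquad : x ⬝ᵥ (Ω *ᵥ x) = 0 := by
      have h1 : x ⬝ᵥ (Ω *ᵥ x) = (Ωᵀ *ᵥ x) ⬝ᵥ x := by
        rw [Matrix.dotProduct_mulVec, ← Matrix.mulVec_transpose]
      have h2 : x ⬝ᵥ (Ω *ᵥ x) = -(x ⬝ᵥ (Ω *ᵥ x)) :=
        calc x ⬝ᵥ (Ω *ᵥ x) = (Ωᵀ *ᵥ x) ⬝ᵥ x := h1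
          _ = -((Ω *ᵥ x) ⬝ᵥ x) := by
              rw [hΩanti, Matrix.neg_mulVec, neg_dotProduct]
          _ = -(x ⬝ᵥ (Ω *ᵥ x)) := by rw [dotProduct_comm]
      linarith
    have hq : star z ⬝ᵥ ((S.map (fun t : ℝ => (t : ℂ))
        + Complex.I • (Ω.map (fun t : ℝ => (t : ℂ)))) *ᵥ z)
        = ((x ⬝ᵥ (S *ᵥ x) : ℝ) : ℂ) := by
      rw [hstarz, Matrix.add_mulVec, Matrix.smul_mulVec, hSz, hΩz,
        dotProduct_add, dotProduct_smul]
      have hS' : z ⬝ᵥ (fun i => (((S *ᵥ x) i : ℝ) : ℂ)) = ((x ⬝ᵥ (S *ᵥ x) : ℝ) : ℂ) := by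
        simp [dotProduct, hz]
      have hΩ' : z ⬝ᵥ (fun i => (((Ω *ᵥ x) i : ℝ) : ℂ)) = 0 := by
        have : z ⬝ᵥ (fun i => (((Ω *ᵥ x) i : ℝ) : ℂ)) = ((x ⬝ᵥ (Ω *ᵥ x) : ℝ) : ℂ) := by
          simp [dotProduct, hz]
        rw [this, hΩquad]; simp
      rw [hS', hΩ', smul_zero, add_zero]
    have hnn : (0 : ℝ) ≤ x ⬝ᵥ (S *ᵥ x) := by
      have := hpos.dotProduct_mulVec_nonneg z
      rw [hq] at this
      exact Complex.zero_le_real.mp this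
    rcases lt_or_eq_of_le hnn with h | h
    · simpa using h
    · -- quadratic form vanishes: contradiction with Ω invertible
      exfalso
      have hzero : (S.map (fun t : ℝ => (t : ℂ))
          + Complex.I • (Ω.map (fun t : ℝ => (t : ℂ)))) *ᵥ z = 0 := by
        rw [← hpos.dotProduct_mulVec_zero_iff, hq, ← h]
        simp
      have hΩx : Ω *ᵥ x = 0 := by
        funext i
        have hi := congrFun hzero i
        rw [Matrix.add_mulVec, Matrix.smul_mulVec, hSz, hΩz] at hi
        have hi' : (((S *ᵥ x) i : ℝ) : ℂ) + Complex.I * (((Ω *ᵥ x) i : ℝ) : ℂ) = 0 := by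
          simpa using hi
        have him := congrArg Complex.im hi'
        simpa using him
      have hx0 : x = 0 := by
        have hinj : Function.Injective (Ω.mulVec) :=
          Matrix.mulVec_injective_iff_isUnit.mpr hΩinv
        have : Ω *ᵥ x = Ω *ᵥ 0 := by rw [hΩx, Matrix.mulVec_zero]
        exact hinj this
      exact hx hx0
end

section
/- Let n = 2 and let Σ₀ be the real symmetric 4×4 matrix [[1,-1,0,0],[-1,1,0,0],[0,0,1,0],[0,0,0,1]], and let J be the standard symplectic 4×4 matrix. Then: (a) Σ₀ is positive semidefinite; (b) writing Σ₀ = [[ΔXX, ΔXP],[ΔXPᵀ, ΔPP]] in 2×2 block form, all the inequalities ΔXX_{jj}·ΔXX_{kk} ≥ (ΔXX_{jk})², ΔPP_{jj}·ΔPP_{kk} ≥ (ΔPP_{jk})², and ΔXX_{jj}·ΔPP_{kk} ≥ (ΔXP_{jk})² + δ_{jk} hold for all 1 ≤ j,k ≤ 2 (δ_{jk} the Kronecker delta); yet (c) the complex Hermitian matrix Σ₀ + iJ is not positive semidefinite. Hence for n > 1 the uncertainty inequalities do not imply the matrix condition Σ + iJ ≥ 0. -/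
open Matrix Complex
open scoped ComplexOrder

/-- The counterexample matrix `Σ₀ = [[1,-1,0,0],[-1,1,0,0],[0,0,1,0],[0,0,0,1]]`
in `2×2` block form: `ΔXX = [[1,-1],[-1,1]]`, `ΔXP = 0`, `ΔPP = I`. -/
noncomputable def counterexampleXX : Matrix (Fin 2) (Fin 2) ℝ := !![1, -1; -1, 1]

noncomputable def counterexampleXP : Matrix (Fin 2) (Fin 2) ℝ := 0

noncomputable def counterexamplePP : Matrix (Fin 2) (Fin 2) ℝ := 1

noncomputable def counterexampleSigma : Matrix (Fin 2 ⊕ Fin 2) (Fin 2 ⊕ Fin 2) ℝ :=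
  Matrix.fromBlocks counterexampleXX counterexampleXP counterexampleXPᵀ counterexamplePP

/-- The standard symplectic `4×4` matrix (n = 2). -/
noncomputable def stdSymplectic2 : Matrix (Fin 2 ⊕ Fin 2) (Fin 2 ⊕ Fin 2) ℝ :=
  Matrix.fromBlocks 0 1 (-1) 0

/-- For `n = 2`, the matrix `Σ₀` is positive semidefinite and satisfies all the
uncertainty inequalities (with `a = c = 0`, `b = δ_{jk}`), yet `Σ₀ + iJ` is
not positive semidefinite: the inequalities do not imply `Σ + iJ ≥ 0`. -/
theorem counterexample_uncertainty_not_posSemidef :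
    counterexampleSigma.PosSemidef ∧
    (∀ j k : Fin 2,
      counterexampleXX j j * counterexampleXX k k ≥ (counterexampleXX j k) ^ 2 ∧
      counterexamplePP j j * counterexamplePP k k ≥ (counterexamplePP j k) ^ 2 ∧
      counterexampleXX j j * counterexamplePP k k ≥
        (counterexampleXP j k) ^ 2 + (if j = k then 1 else 0)) ∧
    ¬ (counterexampleSigma.map (fun x : ℝ => (x : ℂ))
        + Complex.I • (stdSymplectic2.map (fun x : ℝ => (x : ℂ)))).PosSemidef := by
  refine ⟨posSemidef_iff_dotProduct_mulVec.mpr ⟨?_, ?_⟩, ?_, ?_⟩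
  · ext i j
    fin_cases i <;> fin_cases j <;>
      simp [counterexampleSigma, counterexampleXX, counterexampleXP, counterexamplePP,
        Matrix.fromBlocks, IsHermitian]
  · intro x
    have h : star x ⬝ᵥ counterexampleSigma *ᵥ x =
        (x (Sum.inl 0) - x (Sum.inl 1))^2 + (x (Sum.inr 0))^2 + (x (Sum.inr 1))^2 := by
      simp [counterexampleSigma, counterexampleXX, counterexampleXP, counterexamplePP,
        dotProduct, mulVec, Fintype.sum_sum_type, Fin.sum_univ_two, Matrix.fromBlocks,
        Matrix.one_apply]
      ring
    rw [h]; positivity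
  · intro j k
    fin_cases j <;> fin_cases k <;>
      norm_num [counterexampleXX, counterexampleXP, counterexamplePP, Matrix.one_apply]
  · intro h
    have := h.dotProduct_mulVec_nonneg (Sum.elim ![1, 1] ![Complex.I, Complex.I])
    simp [counterexampleSigma, counterexampleXX, counterexampleXP, counterexamplePP,
      stdSymplectic2, dotProduct, mulVec, Fintype.sum_sum_type, Fin.sum_univ_two,
      Matrix.fromBlocks, Matrix.one_apply, Matrix.map] at this
    rw [Complex.le_def] at this
    norm_num [Complex.ext_iff] at this
end

section
/- Let M be a real symmetric positive definite 2n×2n matrix and J the standard symplectic 2n×2n matrix. Then every complex eigenvalue of the matrix J·M is purely imaginary and nonzero, i.e., every eigenvalue has the form ±iλ with λ a positive real number. -/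
open Matrix Complex

/-- The standard symplectic `2n×2n` matrix. -/
noncomputable def stdSymp (n : ℕ) : Matrix (Fin n ⊕ Fin n) (Fin n ⊕ Fin n) ℝ :=
  Matrix.fromBlocks 0 1 (-1) 0

lemma stdSymp_mul_self (n : ℕ) : stdSymp n * stdSymp n = -1 := by
  have h : (-1 : Matrix (Fin n ⊕ Fin n) (Fin n ⊕ Fin n) ℝ) = fromBlocks (-1) 0 0 (-1) := by
    rw [← fromBlocks_one, fromBlocks_neg]; simp
  rw [h]
  simp [stdSymp, fromBlocks_multiply]

lemma stdSymp_transpose (n : ℕ) : (stdSymp n)ᵀ = -stdSymp n := by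
  simp [stdSymp, fromBlocks_transpose, fromBlocks_neg]

lemma mapC_conjTranspose {ι : Type*} (A : Matrix ι ι ℝ) :
    (A.map (fun x : ℝ => (x : ℂ)))ᴴ = Aᵀ.map (fun x : ℝ => (x : ℂ)) := by
  ext i j
  simp [conjTranspose_apply, map_apply, Complex.conj_ofReal]

lemma herm_dot {ι : Type*} [Fintype ι] (A : Matrix ι ι ℂ) (v : ι → ℂ) :
    star (star v ⬝ᵥ A *ᵥ v) = star v ⬝ᵥ Aᴴ *ᵥ v := by
  simp only [dotProduct, mulVec, dotProduct, conjTranspose_apply, star_sum, star_mul',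
    star_star, Finset.mul_sum, Pi.star_apply]
  rw [Finset.sum_comm]
  congr 1; ext i; congr 1; ext j; ring

lemma re_dot {ι : Type*} [Fintype ι] (M : Matrix ι ι ℝ) (v : ι → ℂ) :
    (star v ⬝ᵥ (M.map (fun x : ℝ => (x : ℂ))) *ᵥ v).re
      = (fun i => (v i).re) ⬝ᵥ M *ᵥ (fun i => (v i).re)
        + (fun i => (v i).im) ⬝ᵥ M *ᵥ (fun i => (v i).im) := by
  simp only [dotProduct, mulVec, map_apply, Pi.star_apply, Finset.mul_sum, Complex.re_sum,
    Complex.mul_re, Complex.mul_im, Complex.ofReal_re, Complex.ofReal_im, RCLike.star_def,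
    Complex.conj_re, Complex.conj_im]
  rw [← Finset.sum_add_distrib]
  congr 1; ext i
  rw [← Finset.sum_add_distrib]
  congr 1; ext j; ring

/-- If `M` is real symmetric positive definite, then every complex eigenvalue
of `J·M` is purely imaginary and nonzero, i.e. of the form `±iλ` with `λ > 0`
real. -/
theorem eigenvalues_JM_purely_imaginary (n : ℕ)
    (M : Matrix (Fin n ⊕ Fin n) (Fin n ⊕ Fin n) ℝ)
    (hMsym : Mᵀ = M) (hMpos : M.PosDef) :
    ∀ (μ : ℂ) (v : (Fin n ⊕ Fin n) → ℂ), v ≠ 0 →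
      ((stdSymp n * M).map (fun x : ℝ => (x : ℂ))) *ᵥ v = μ • v →
      μ.re = 0 ∧ μ ≠ 0 ∧
        ∃ lam : ℝ, 0 < lam ∧ (μ = Complex.I * lam ∨ μ = -(Complex.I * lam)) := by
  intro μ v hv hev
  set f : ℝ → ℂ := fun x : ℝ => (x : ℂ) with hf
  have hfrh : f = ⇑Complex.ofRealHom := rfl
  set Jc : Matrix (Fin n ⊕ Fin n) (Fin n ⊕ Fin n) ℂ := (stdSymp n).map f with hJc
  set Mc : Matrix (Fin n ⊕ Fin n) (Fin n ⊕ Fin n) ℂ := M.map f with hMc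
  have hmul : (stdSymp n * M).map f = Jc * Mc := by
    rw [hfrh]; exact Matrix.map_mul
  rw [hmul] at hev
  -- M over ℂ is Hermitian
  have hMcH : Mcᴴ = Mc := by rw [hMc, mapC_conjTranspose, hMsym]
  have hJcH : Jcᴴ = -Jc := by
    rw [hJc, mapC_conjTranspose, stdSymp_transpose]
    ext i j; simp [map_apply, hf]
  -- the positive quantity c
  set c : ℂ := star v ⬝ᵥ Mc *ᵥ v with hc
  have hcim : c.im = 0 := by
    have h1 : star c = c := by rw [hc, herm_dot, hMcH]
    have h2 := congrArg Complex.im h1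
    rw [Complex.star_def, Complex.conj_im] at h2
    linarith
  have hab : (fun i => (v i).re) ≠ 0 ∨ (fun i => (v i).im) ≠ 0 := by
    by_contra h
    push_neg at h
    apply hv
    funext i
    have h1 := congrFun h.1 i
    have h2 := congrFun h.2 i
    simp only [Pi.zero_apply] at h1 h2 ⊢
    exact Complex.ext h1 h2
  have hcre : 0 < c.re := by
    rw [hc, re_dot]
    rcases hab with h | h
    · have := hMpos.dotProduct_mulVec_pos h
      have h2 := hMpos.posSemidef.dotProduct_mulVec_nonneg (fun i => (v i).im)
      simp only [star_trivial] at this h2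
      linarith
    · have := hMpos.dotProduct_mulVec_pos h
      have h2 := hMpos.posSemidef.dotProduct_mulVec_nonneg (fun i => (v i).re)
      simp only [star_trivial] at this h2
      linarith
  -- the skew quantity d = μ * c
  have hd : star v ⬝ᵥ (Mc * (Jc * Mc)) *ᵥ v = μ * c := by
    rw [← Matrix.mulVec_mulVec, hev, Matrix.mulVec_smul, dotProduct_smul, hc]
    rfl
  have hskew : (Mc * (Jc * Mc))ᴴ = -(Mc * (Jc * Mc)) := by
    rw [Matrix.conjTranspose_mul, Matrix.conjTranspose_mul, hMcH, hJcH]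
    noncomm_ring
  have hstar : star (μ * c) = -(μ * c) := by
    rw [← hd, herm_dot, hskew, Matrix.neg_mulVec, dotProduct_neg, hd]
  have hre0 : (μ * c).re = 0 := by
    have h2 := congrArg Complex.re hstar
    rw [Complex.star_def, Complex.conj_re, Complex.neg_re] at h2
    linarith
  have hμre : μ.re = 0 := by
    rw [Complex.mul_re, hcim] at hre0
    simp only [mul_zero, sub_zero] at hre0
    rcases mul_eq_zero.mp hre0 with h | h
    · exact h
    · exact absurd h (ne_of_gt hcre)
  -- μ ≠ 0
  have hμne : μ ≠ 0 := by
    intro h0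
    rw [h0, zero_smul] at hev
    have hJJ : Jc * Jc = (-1 : Matrix (Fin n ⊕ Fin n) (Fin n ⊕ Fin n) ℂ) := by
      rw [hJc, hfrh, ← Matrix.map_mul, stdSymp_mul_self]
      ext i j
      simp [map_apply, Matrix.one_apply, apply_ite]
    have hMv : Mc *ᵥ v = 0 := by
      have h1 : Jc *ᵥ ((Jc * Mc) *ᵥ v) = 0 := by rw [hev, Matrix.mulVec_zero]
      rw [Matrix.mulVec_mulVec, ← Matrix.mul_assoc, hJJ] at h1
      have h2 : ((-1 : Matrix (Fin n ⊕ Fin n) (Fin n ⊕ Fin n) ℂ) * Mc) *ᵥ v = -(Mc *ᵥ v) := by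
        rw [neg_one_mul, Matrix.neg_mulVec]
      rw [h2] at h1
      exact neg_eq_zero.mp h1
    have : c = 0 := by rw [hc, hMv, dotProduct_zero]
    rw [this] at hcre
    simp at hcre
  refine ⟨hμre, hμne, ?_⟩
  have hμim : μ.im ≠ 0 := by
    intro h
    exact hμne (Complex.ext hμre h)
  rcases lt_or_gt_of_ne hμim with h | h
  · refine ⟨-μ.im, by linarith, Or.inr ?_⟩
    apply Complex.ext <;> simp [hμre]
  · refine ⟨μ.im, h, Or.inl ?_⟩
    apply Complex.ext <;> simp [hμre]
end

section
/- (Williamson's diagonalization theorem) Let M be a real symmetric positive definite 2n×2n matrix. Then there exist a real symplectic matrix S (i.e., Sᵀ·J·S = J, where J is the standard symplectic matrix) and positive real numbers λ₁, ..., λₙ such that Sᵀ·M·S is the diagonal matrix diag(λ₁, ..., λₙ, λ₁, ..., λₙ). -/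
open Matrix

section Aux

open Module

local notation "⟪" x ", " y "⟫" => @inner ℝ _ _ x y

theorem skew_pairs (n : ℕ) :
    ∀ (V : Type) (_ : NormedAddCommGroup V) (_ : InnerProductSpace ℝ V)
      (_ : FiniteDimensional ℝ V) (T : V →ₗ[ℝ] V),
    (∀ x y : V, ⟪T x, y⟫ = -⟪x, T y⟫) → Function.Injective T →
    Module.finrank ℝ V = 2 * n →
    ∃ (e : Fin n ⊕ Fin n → V) (lam : Fin n → ℝ),
      Orthonormal ℝ e ∧ (∀ j, 0 < lam j) ∧
      (∀ j, T (e (Sum.inl j)) = -lam j • e (Sum.inr j)) ∧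
      (∀ j, T (e (Sum.inr j)) = lam j • e (Sum.inl j)) := by
  induction n with
  | zero =>
    intro V _ _ _ T hskew hinj hrank
    refine ⟨Sum.elim Fin.elim0 Fin.elim0, Fin.elim0, ?_, fun j => j.elim0,
      fun j => j.elim0, fun j => j.elim0⟩
    constructor
    · rintro (i | i) <;> exact i.elim0
    · rintro (i | i) <;> exact i.elim0
  | succ n ih =>
    intro V _ _ _ T hskew hinj hrank
    haveI : Nontrivial V := Module.nontrivial_of_finrank_pos (R := ℝ) (by omega)
    have hT2 : (T ∘ₗ T).IsSymmetric := by
      intro x y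
      simp only [LinearMap.comp_apply]
      rw [hskew (T x) y, hskew x (T y), neg_neg]
    obtain ⟨v, hv⟩ := (hT2.hasEigenvalue_iSup_of_finiteDimensional).exists_hasEigenvector
    set μ : ℝ := _
    have hv0 : v ≠ 0 := hv.right
    have hveq : T (T v) = μ • v := by
      have := hv.apply_eq_smul
      simpa using this
    set x : V := ‖v‖⁻¹ • v with hxdef
    have hx1 : ‖x‖ = 1 := norm_smul_inv_norm hv0
    have hx0 : x ≠ 0 := by
      intro h; rw [h] at hx1; simp at hx1
    have hTx : T (T x) = μ • x := by
      rw [hxdef, LinearMap.map_smul, LinearMap.map_smul, hveq, smul_comm]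
    have hTx0 : T x ≠ 0 := fun h => hx0 (by simpa using hinj (h.trans (map_zero T).symm))
    have hmu : μ = -‖T x‖ ^ 2 := by
      have h1 : ⟪T (T x), x⟫ = -⟪T x, T x⟫ := hskew (T x) x
      rw [hTx, real_inner_smul_left, real_inner_self_eq_norm_sq,
        real_inner_self_eq_norm_sq, hx1] at h1
      simpa using h1
    have hmuneg : μ < 0 := by
      have hpos : 0 < ‖T x‖ := norm_pos_iff.mpr hTx0
      rw [hmu, neg_lt_zero]
      positivity
    set lam0 : ℝ := Real.sqrt (-μ) with hlamdef
    have hlam0 : 0 < lam0 := Real.sqrt_pos.mpr (by linarith)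
    have hlamsq : lam0 ^ 2 = -μ := Real.sq_sqrt (by linarith)
    have hnormTx : ‖T x‖ = lam0 := by
      rw [hlamdef, hmu, neg_neg, Real.sqrt_sq (norm_nonneg _)]
    set y : V := -(lam0⁻¹) • T x with hydef
    have hy1 : ‖y‖ = 1 := by
      rw [hydef, norm_smul, hnormTx]
      simp [abs_of_pos hlam0, inv_mul_cancel₀ hlam0.ne']
    have hTxy : T x = -lam0 • y := by
      rw [hydef, smul_smul]
      rw [show -lam0 * -(lam0⁻¹) = 1 by field_simp]
      simp
    have hTy : T y = lam0 • x := by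
      have hmu2 : μ = -lam0 ^ 2 := by linarith [hlamsq]
      rw [hydef, LinearMap.map_smul, hTx, smul_smul, hmu2]
      congr 1
      field_simp
    have hxy : ⟪x, y⟫ = 0 := by
      have hc : ⟪T x, x⟫ = ⟪x, T x⟫ := real_inner_comm _ _
      have h2 : ⟪x, T x⟫ = 0 := by linarith [hskew x x, hc]
      rw [hydef, real_inner_smul_right, h2, mul_zero]
    have hyx : ⟪y, x⟫ = 0 := by rw [real_inner_comm]; exact hxy
    have hxx : ⟪x, x⟫ = (1 : ℝ) := by
      rw [real_inner_self_eq_norm_sq, hx1]; norm_num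
    have hyy : ⟪y, y⟫ = (1 : ℝ) := by
      rw [real_inner_self_eq_norm_sq, hy1]; norm_num
    -- orthonormal pair and its span
    set b : Fin 2 → V := ![x, y] with hbdef
    have hbo : Orthonormal ℝ b := by
      rw [orthonormal_iff_ite]
      intro i j
      fin_cases i <;> fin_cases j <;> simp [hbdef, hxx, hyy, hxy, hyx, hx1, hy1]
    set W : Submodule ℝ V := (Submodule.span ℝ (Set.range b))ᗮ with hWdef
    have hmemW : ∀ w : V, w ∈ W ↔ ⟪x, w⟫ = 0 ∧ ⟪y, w⟫ = 0 := by
      intro w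
      constructor
      · intro hw
        have hxmem : x ∈ Set.range b := ⟨0, by simp [hbdef]⟩
        have hymem : y ∈ Set.range b := ⟨1, by simp [hbdef]⟩
        exact ⟨Submodule.inner_right_of_mem_orthogonal (Submodule.subset_span hxmem) hw,
          Submodule.inner_right_of_mem_orthogonal (Submodule.subset_span hymem) hw⟩
      · rintro ⟨h1, h2⟩
        rw [hWdef, Submodule.mem_orthogonal]
        intro u hu
        induction hu using Submodule.span_induction with
        | mem u hu =>
          obtain ⟨i, rfl⟩ := hu
          fin_cases i
          · simpa [hbdef] using h1
          · simpa [hbdef] using h2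
        | zero => simp
        | add u u' _ _ h h' => rw [inner_add_left, h, h', add_zero]
        | smul c u _ h => rw [real_inner_smul_left, h, mul_zero]
    have hTW : ∀ w ∈ W, T w ∈ W := by
      intro w hw
      obtain ⟨h1, h2⟩ := (hmemW w).mp hw
      rw [hmemW]
      constructor
      · have h := hskew x w
        rw [hTxy, real_inner_smul_left, h2, mul_zero] at h
        linarith
      · have h := hskew y w
        rw [hTy, real_inner_smul_left, h1, mul_zero] at h
        linarith
    have hrank2 : finrank ℝ (Submodule.span ℝ (Set.range b)) = 2 := by
      rw [finrank_span_eq_card hbo.linearIndependent]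
      simp
    have hrankW : finrank ℝ W = 2 * n := by
      have h := Submodule.finrank_add_finrank_orthogonal (Submodule.span ℝ (Set.range b))
      rw [← hWdef, hrank2, hrank] at h
      omega
    have hskew' : ∀ a c : W, ⟪T.restrict hTW a, c⟫ = -⟪a, T.restrict hTW c⟫ := by
      intro a c
      simp only [Submodule.coe_inner, LinearMap.restrict_coe_apply]
      exact hskew _ _
    have hinj' : Function.Injective (T.restrict hTW) := by
      intro a c h
      apply Subtype.ext
      apply hinj
      have h2 := congrArg (Subtype.val) h
      simpa [LinearMap.restrict_coe_apply] using h2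
    obtain ⟨e', lam', ho', hpos', hl', hr'⟩ :=
      ih W inferInstance inferInstance inferInstance (T.restrict hTW) hskew' hinj' hrankW
    -- facts about e'
    have he'x : ∀ i, ⟪x, (e' i : V)⟫ = 0 := fun i => ((hmemW _).mp (e' i).2).1
    have he'y : ∀ i, ⟪y, (e' i : V)⟫ = 0 := fun i => ((hmemW _).mp (e' i).2).2
    have he'x2 : ∀ i, ⟪(e' i : V), x⟫ = 0 := fun i => by
      rw [real_inner_comm]; exact he'x i
    have he'y2 : ∀ i, ⟪(e' i : V), y⟫ = 0 := fun i => by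
      rw [real_inner_comm]; exact he'y i
    have hee : ∀ i j, ⟪(e' i : V), (e' j : V)⟫ = if i = j then (1 : ℝ) else 0 := by
      intro i j
      have h := orthonormal_iff_ite.mp ho' i j
      rwa [Submodule.coe_inner] at h
    refine ⟨Sum.elim (Fin.cons x fun j => (e' (Sum.inl j) : V))
      (Fin.cons y fun j => (e' (Sum.inr j) : V)), Fin.cons lam0 lam', ?_, ?_, ?_, ?_⟩
    · rw [orthonormal_iff_ite]
      rintro (i | i) (j | j) <;>
        induction i using Fin.cases <;> induction j using Fin.cases <;>
          simp [hxx, hyy, hxy, hyx, hx1, hy1, hee, he'x, he'y, he'x2, he'y2, Fin.succ_ne_zero,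
            (Fin.succ_ne_zero _).symm, Fin.succ_inj]
    · intro j
      induction j using Fin.cases
      · simpa using hlam0
      · simpa using hpos' _
    · intro j
      induction j using Fin.cases with
      | zero => simpa using hTxy
      | succ k =>
        simp only [Sum.elim_inl, Sum.elim_inr, Fin.cons_succ]
        have h := congrArg (Subtype.val) (hl' k)
        rw [LinearMap.restrict_coe_apply] at h
        rw [h]
        simp
    · intro j
      induction j using Fin.cases with
      | zero => simpa using hTy
      | succ k =>
        simp only [Sum.elim_inl, Sum.elim_inr, Fin.cons_succ]
        have h := congrArg (Subtype.val) (hr' k)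
        rw [LinearMap.restrict_coe_apply] at h
        rw [h]
        simp

theorem skew_normal_form (n : ℕ) (A : Matrix (Fin n ⊕ Fin n) (Fin n ⊕ Fin n) ℝ)
    (hA : Aᵀ = -A) (hAdet : IsUnit A.det) :
    ∃ (Q : Matrix (Fin n ⊕ Fin n) (Fin n ⊕ Fin n) ℝ) (d : Fin n → ℝ),
      Qᵀ * Q = 1 ∧ (∀ j, 0 < d j) ∧
      Qᵀ * A * Q = fromBlocks 0 (diagonal d) (-(diagonal d)) 0 := by
  set V : Type := EuclideanSpace ℝ (Fin n ⊕ Fin n) with hVdef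
  set T : V →ₗ[ℝ] V := Matrix.toEuclideanLin A with hTdef
  have hTapp : ∀ (u : V) (i), T u i = (A *ᵥ (fun k => u k)) i := by
    intro u i
    rfl
  have hinner : ∀ u w : V, ⟪u, w⟫ = ∑ i, u i * w i := by
    intro u w
    rw [PiLp.inner_apply]
    simp [RCLike.inner_apply, mul_comm]
  have hskew : ∀ u w : V, ⟪T u, w⟫ = -⟪u, T w⟫ := by
    intro u w
    rw [hinner, hinner]
    have h1 : ∑ i, T u i * w i = (A *ᵥ (fun k => u k)) ⬝ᵥ (fun k => w k) := by
      simp only [hTapp]; rfl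
    have h2 : ∑ i, u i * T w i = (fun k => u k) ⬝ᵥ (A *ᵥ (fun k => w k)) := by
      simp only [hTapp]; rfl
    rw [h1, h2, dotProduct_mulVec, ← mulVec_transpose, hA]
    simp [Matrix.neg_mulVec, dotProduct_comm]
  have hinj : Function.Injective T := by
    have h := Matrix.mulVec_injective_iff_isUnit.mpr ((Matrix.isUnit_iff_isUnit_det A).mpr hAdet)
    intro u w huw
    have : A *ᵥ (fun k => u k) = A *ᵥ (fun k => w k) := by
      funext i
      rw [← hTapp, ← hTapp, huw]
    have h2 := h this
    ext i
    exact congrFun h2 i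
  have hrank : Module.finrank ℝ V = 2 * n := by
    show Module.finrank ℝ (EuclideanSpace ℝ (Fin n ⊕ Fin n)) = 2 * n
    simp [finrank_euclideanSpace]
    omega
  obtain ⟨e, lam, ho, hpos, hl, hr⟩ :=
    skew_pairs n V inferInstance inferInstance inferInstance T hskew hinj hrank
  set Q : Matrix (Fin n ⊕ Fin n) (Fin n ⊕ Fin n) ℝ := Matrix.of (fun i j => e j i) with hQdef
  have hQorth : Qᵀ * Q = 1 := by
    ext i j
    have h := orthonormal_iff_ite.mp ho i j
    rw [hinner] at h
    simp only [Matrix.mul_apply, Matrix.transpose_apply, hQdef, Matrix.of_apply,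
      Matrix.one_apply]
    rw [h]
  have hAQ : ∀ (i j), (Qᵀ * A * Q) i j = ⟪e i, T (e j)⟫ := by
    intro i j
    rw [hinner]
    simp only [Matrix.mul_apply, Matrix.transpose_apply, hQdef, Matrix.of_apply]
    simp only [hTapp, Matrix.mulVec, dotProduct, Finset.sum_mul, Finset.mul_sum]
    rw [Finset.sum_comm]
    exact Finset.sum_congr rfl fun k _ => Finset.sum_congr rfl fun l _ => by ring
  refine ⟨Q, lam, hQorth, hpos, ?_⟩
  ext i j
  rw [hAQ]
  have hee := orthonormal_iff_ite.mp ho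
  rcases i with i | i <;> rcases j with j | j
  · rw [hl j, real_inner_smul_right, hee]
    simp [Matrix.fromBlocks_apply₁₁]
  · rw [hr j, real_inner_smul_right, hee]
    rw [Matrix.fromBlocks_apply₁₂]
    by_cases hij : i = j <;> simp [hij, Matrix.diagonal_apply]
  · rw [hl j, real_inner_smul_right, hee]
    rw [Matrix.fromBlocks_apply₂₁]
    by_cases hij : i = j <;> simp [hij, Matrix.diagonal_apply]
  · rw [hr j, real_inner_smul_right, hee]
    simp [Matrix.fromBlocks_apply₂₂]

end Aux

/-- Williamson's diagonalization theorem: every real symmetric positive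
definite `2n×2n` matrix `M` can be brought to the diagonal form
`diag(λ₁,...,λₙ,λ₁,...,λₙ)` with `λ_j > 0` by a symplectic congruence
`M ↦ Sᵀ·M·S`. -/
theorem williamson_diagonalization (n : ℕ)
    (M : Matrix (Fin n ⊕ Fin n) (Fin n ⊕ Fin n) ℝ)
    (hMsym : Mᵀ = M) (hMpos : M.PosDef) :
    ∃ (S : Matrix (Fin n ⊕ Fin n) (Fin n ⊕ Fin n) ℝ) (lam : Fin n → ℝ),
      Sᵀ * stdSymp n * S = stdSymp n ∧
      (∀ j, 0 < lam j) ∧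
      Sᵀ * M * S = Matrix.diagonal (Sum.elim lam lam) := by
  set K : Matrix (Fin n ⊕ Fin n) (Fin n ⊕ Fin n) ℝ :=
    (open scoped MatrixOrder in CFC.sqrt M) with hKdef
  have hK2 : K * K = M :=
    open scoped MatrixOrder in CFC.sqrt_mul_sqrt_self M hMpos.posSemidef.nonneg
  have hKsym : Kᵀ = K := by
    have h := open scoped MatrixOrder in (CFC.sqrt_nonneg M).posSemidef.isHermitian
    rwa [Matrix.IsHermitian, Matrix.conjTranspose_eq_transpose_of_trivial] at h
  have hKdet : IsUnit K.det := by
    have h : K.det * K.det = M.det := by rw [← Matrix.det_mul, hK2]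
    have hMdet : M.det ≠ 0 := ne_of_gt hMpos.det_pos
    exact isUnit_iff_ne_zero.mpr fun h0 => hMdet (by rw [← h, h0, zero_mul])
  have hKTinv : (K⁻¹)ᵀ = K⁻¹ := by rw [Matrix.transpose_nonsing_inv, hKsym]
  -- the standard symplectic matrix
  have hJT : (stdSymp n)ᵀ = -stdSymp n := by
    rw [stdSymp, Matrix.fromBlocks_transpose]
    rw [show (fromBlocks 0 1 (-1) 0 : Matrix (Fin n ⊕ Fin n) (Fin n ⊕ Fin n) ℝ)
      = fromBlocks 0 1 (-1) 0 from rfl]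
    simp [Matrix.fromBlocks_neg]
  have hJJ : stdSymp n * (-(stdSymp n)) = 1 := by
    rw [stdSymp, Matrix.fromBlocks_neg, Matrix.fromBlocks_multiply]
    simp [← Matrix.fromBlocks_one]
  have hJdet : IsUnit (stdSymp n).det := Matrix.isUnit_det_of_right_inverse hJJ
  -- the skew matrix A
  set A : Matrix (Fin n ⊕ Fin n) (Fin n ⊕ Fin n) ℝ := K⁻¹ * stdSymp n * K⁻¹ with hAdef
  have hAT : Aᵀ = -A := by
    rw [hAdef, Matrix.transpose_mul, Matrix.transpose_mul, hKTinv, hJT]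
    simp only [Matrix.neg_mul, Matrix.mul_neg]
    rw [Matrix.mul_assoc]
  have hAdet : IsUnit A.det := by
    rw [hAdef, Matrix.det_mul, Matrix.det_mul]
    exact ((Matrix.isUnit_nonsing_inv_det K hKdet).mul hJdet).mul
      (Matrix.isUnit_nonsing_inv_det K hKdet)
  obtain ⟨Q, d, hQorth, hdpos, hQAQ⟩ := skew_normal_form n A hAT hAdet
  set lam : Fin n → ℝ := fun j => (d j)⁻¹ with hlamdef
  have hlampos : ∀ j, 0 < lam j := fun j => inv_pos.mpr (hdpos j)
  set s : Fin n → ℝ := fun j => Real.sqrt (lam j) with hsdef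
  have hs2 : ∀ j, s j * s j = lam j := fun j => Real.mul_self_sqrt (hlampos j).le
  set E : Matrix (Fin n ⊕ Fin n) (Fin n ⊕ Fin n) ℝ := diagonal (Sum.elim s s) with hEdef
  have hE : E = fromBlocks (diagonal s) 0 0 (diagonal s) := (Matrix.fromBlocks_diagonal s s).symm
  have hET : Eᵀ = E := Matrix.diagonal_transpose _
  set S : Matrix (Fin n ⊕ Fin n) (Fin n ⊕ Fin n) ℝ := K⁻¹ * Q * E with hSdef
  refine ⟨S, lam, ?_, hlampos, ?_⟩
  · have step1 : Sᵀ * stdSymp n * S = E * (Qᵀ * A * Q) * E := by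
      rw [hSdef, hAdef, Matrix.transpose_mul, Matrix.transpose_mul, hKTinv, hET]
      simp only [Matrix.mul_assoc]
    have hsd : ∀ i, s i * d i * s i = 1 := by
      intro i
      calc s i * d i * s i = s i * s i * d i := by ring
        _ = (d i)⁻¹ * d i := by rw [hs2 i]
        _ = 1 := inv_mul_cancel₀ (hdpos i).ne'
    have hone : diagonal s * (diagonal d * diagonal s) = 1 := by
      rw [Matrix.diagonal_mul_diagonal, Matrix.diagonal_mul_diagonal]
      rw [show (fun i => s i * (d i * s i)) = fun _ => (1:ℝ) from
        funext fun i => by rw [← mul_assoc]; exact hsd i]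
      exact Matrix.diagonal_one
    rw [step1, hQAQ, hE]
    rw [Matrix.fromBlocks_multiply, Matrix.fromBlocks_multiply, stdSymp]
    simp only [Matrix.mul_zero, Matrix.zero_mul, zero_add, add_zero,
      Matrix.mul_neg, Matrix.neg_mul, neg_zero, Matrix.mul_assoc, neg_neg]
    rw [hone]
  · have step2 : Sᵀ * M * S = E * (Qᵀ * (K⁻¹ * M * K⁻¹) * Q) * E := by
      rw [hSdef, Matrix.transpose_mul, Matrix.transpose_mul, hKTinv, hET]
      simp only [Matrix.mul_assoc]
    have hKM : K⁻¹ * M * K⁻¹ = 1 := by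
      rw [← hK2]
      have h : K⁻¹ * (K * K) * K⁻¹ = (K⁻¹ * K) * (K * K⁻¹) := by
        simp only [Matrix.mul_assoc]
      rw [h, Matrix.nonsing_inv_mul _ hKdet, Matrix.mul_nonsing_inv _ hKdet, Matrix.one_mul]
    rw [step2, hKM, Matrix.mul_one, hQorth, Matrix.mul_one, hEdef,
      Matrix.diagonal_mul_diagonal]
    have h : (fun i => (Sum.elim s s) i * (Sum.elim s s) i) = Sum.elim lam lam := by
      funext i
      rcases i with i | i <;> simp [hs2 i]
    rw [h]
end

section
/- (Linear non-squeezing) Let n ≥ 1, let S be a real symplectic 2n×2n matrix (Sᵀ·J·S = J), let z₀ ∈ ℝ^{2n}, let R > 0 and r > 0, and fix an index 1 ≤ j ≤ n. Write points of ℝ^{2n} as z = (x₁,...,xₙ,p₁,...,pₙ). If for every z ∈ ℝ^{2n} with Euclidean norm |z| ≤ R the point w = S·z + z₀ satisfies w_j² + w_{n+j}² ≤ r², then R ≤ r. In other words, no affine symplectic map sends the ball B(R) into the symplectic cylinder Z_j(r) with r < R. -/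
open Matrix

set_option maxHeartbeats 1000000 in
/-- Linear non-squeezing: if the affine symplectic map `z ↦ S·z + z₀` sends the
closed Euclidean ball of radius `R` into the symplectic cylinder
`{w : w_j² + w_{n+j}² ≤ r²}` based on the conjugate pair `(x_j, p_j)`,
then `R ≤ r`. -/
theorem linear_nonsqueezing (n : ℕ) (hn : 1 ≤ n)
    (S : Matrix (Fin n ⊕ Fin n) (Fin n ⊕ Fin n) ℝ)
    (hS : Sᵀ * stdSymp n * S = stdSymp n)
    (z₀ : (Fin n ⊕ Fin n) → ℝ) (R r : ℝ) (hR : 0 < R) (hr : 0 < r)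
    (j : Fin n)
    (hsqueeze : ∀ z : (Fin n ⊕ Fin n) → ℝ,
      (∑ i, z i ^ 2) ≤ R ^ 2 →
      ((S *ᵥ z + z₀) (Sum.inl j)) ^ 2 + ((S *ᵥ z + z₀) (Sum.inr j)) ^ 2 ≤ r ^ 2) :
    R ≤ r := by
  set J := stdSymp n with hJ
  -- J² = -1
  have hJJ : J * J = -1 := by
    rw [hJ, stdSymp, Matrix.fromBlocks_multiply, ← Matrix.fromBlocks_one, Matrix.fromBlocks_neg]
    norm_num
  -- S is invertible with inverse -J Sᵀ J, hence S J Sᵀ = J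
  have h1 : ((-J) * Sᵀ * J) * S = 1 := by
    rw [Matrix.mul_assoc, Matrix.mul_assoc, ← Matrix.mul_assoc Sᵀ, hS, Matrix.neg_mul, hJJ]
    simp
  have h2 : S * ((-J) * Sᵀ * J) = 1 := mul_eq_one_comm.mp h1
  have hS' : S * J * Sᵀ = J := by
    have e : S * ((-J) * Sᵀ * J) * (-J) = 1 * (-J) := by rw [h2]
    rw [Matrix.one_mul] at e
    rw [Matrix.mul_assoc, Matrix.mul_assoc, Matrix.mul_assoc, Matrix.mul_neg, Matrix.mul_neg,
      hJJ] at e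
    simp only [Matrix.neg_mul, Matrix.mul_neg, neg_neg, Matrix.mul_one] at e
    rw [← Matrix.mul_assoc] at e
    exact neg_inj.mp e
  -- the symplectic pairing of the two relevant rows of S equals 1
  have key := congrFun (congrFun hS' (Sum.inl j)) (Sum.inr j)
  simp [Matrix.mul_apply, hJ, stdSymp, Matrix.fromBlocks, Fintype.sum_sum_type,
    Matrix.one_apply, Finset.mul_sum, Matrix.transpose_apply] at key
  -- the two rows of S
  set a : (Fin n ⊕ Fin n) → ℝ := fun i => S (Sum.inl j) i with ha
  set b : (Fin n ⊕ Fin n) → ℝ := fun i => S (Sum.inr j) i with hb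
  set g : (Fin n ⊕ Fin n) → ℝ :=
    Sum.elim (fun k => b (Sum.inr k)) (fun k => -b (Sum.inl k)) with hg
  have hag : ∑ i, a i * g i = 1 := by
    rw [Fintype.sum_sum_type]
    simp only [hg, Sum.elim_inl, Sum.elim_inr, ha, hb, mul_neg, Finset.sum_neg_distrib]
    linarith [key]
  have hgb : ∑ i, g i ^ 2 = ∑ i, b i ^ 2 := by
    rw [Fintype.sum_sum_type, Fintype.sum_sum_type]
    simp only [hg, Sum.elim_inl, Sum.elim_inr, neg_sq]
    exact add_comm _ _
  set A := ∑ i, a i ^ 2 with hA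
  set B := ∑ i, b i ^ 2 with hB
  -- Cauchy-Schwarz: 1 ≤ A * B
  have hCS : 1 ≤ A * B := by
    have h := Finset.sum_mul_sq_le_sq_mul_sq Finset.univ a g
    rw [hag, hgb, ← hA] at h
    simpa using h
  have hA0 : 0 ≤ A := Finset.sum_nonneg fun i _ => sq_nonneg _
  have hB0 : 0 ≤ B := Finset.sum_nonneg fun i _ => sq_nonneg _
  have hApos : 0 < A := by nlinarith
  have hBpos : 0 < B := by nlinarith
  -- from the squeezing hypothesis, drop the affine shift by averaging z and -z
  have hlin : ∀ z : (Fin n ⊕ Fin n) → ℝ, (∑ i, z i ^ 2) ≤ R ^ 2 →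
      ((S *ᵥ z) (Sum.inl j)) ^ 2 + ((S *ᵥ z) (Sum.inr j)) ^ 2 ≤ r ^ 2 := by
    intro z hz
    have h₁ := hsqueeze z hz
    have h₂ := hsqueeze (-z) (by simpa using hz)
    have hneg : S *ᵥ (-z) = -(S *ᵥ z) := by
      simp [Matrix.mulVec_neg]
    rw [hneg] at h₂
    simp only [Pi.add_apply, Pi.neg_apply] at h₁ h₂
    nlinarith [h₁, h₂, sq_nonneg (z₀ (Sum.inl j)), sq_nonneg (z₀ (Sum.inr j))]
  -- test vector in direction a
  have hRA : R ^ 2 * A ≤ r ^ 2 := by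
    have hz : (∑ i, ((R / Real.sqrt A) • a) i ^ 2) ≤ R ^ 2 := by
      simp only [Pi.smul_apply, smul_eq_mul, mul_pow]
      rw [← Finset.mul_sum, ← hA, div_pow, Real.sq_sqrt hA0]
      rw [div_mul_cancel₀ _ (ne_of_gt hApos)]
    have h := hlin _ hz
    have hval : (S *ᵥ ((R / Real.sqrt A) • a)) (Sum.inl j) = (R / Real.sqrt A) * A := by
      simp only [Matrix.mulVec, dotProduct, Pi.smul_apply, smul_eq_mul]
      rw [hA]
      rw [Finset.mul_sum]
      congr 1; ext i; rw [ha]; ring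
    rw [hval] at h
    have : ((R / Real.sqrt A) * A) ^ 2 = R ^ 2 * A := by
      rw [mul_pow, div_pow, Real.sq_sqrt hA0]
      field_simp
    nlinarith [sq_nonneg ((S *ᵥ ((R / Real.sqrt A) • a)) (Sum.inr j))]
  -- test vector in direction b
  have hRB : R ^ 2 * B ≤ r ^ 2 := by
    have hz : (∑ i, ((R / Real.sqrt B) • b) i ^ 2) ≤ R ^ 2 := by
      simp only [Pi.smul_apply, smul_eq_mul, mul_pow]
      rw [← Finset.mul_sum, ← hB, div_pow, Real.sq_sqrt hB0]
      rw [div_mul_cancel₀ _ (ne_of_gt hBpos)]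
    have h := hlin _ hz
    have hval : (S *ᵥ ((R / Real.sqrt B) • b)) (Sum.inr j) = (R / Real.sqrt B) * B := by
      simp only [Matrix.mulVec, dotProduct, Pi.smul_apply, smul_eq_mul]
      rw [hB]
      rw [Finset.mul_sum]
      congr 1; ext i; rw [hb]; ring
    rw [hval] at h
    have : ((R / Real.sqrt B) * B) ^ 2 = R ^ 2 * B := by
      rw [mul_pow, div_pow, Real.sq_sqrt hB0]
      field_simp
    nlinarith [sq_nonneg ((S *ᵥ ((R / Real.sqrt B) • b)) (Sum.inl j))]
  -- combine: R⁴ ≤ R⁴ A B ≤ r⁴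
  have h4 : R ^ 2 * A * (R ^ 2 * B) ≤ r ^ 2 * r ^ 2 :=
    mul_le_mul hRA hRB (mul_nonneg (sq_nonneg R) hBpos.le) (sq_nonneg r)
  have h5 : R ^ 4 * 1 ≤ R ^ 4 * (A * B) :=
    mul_le_mul_of_nonneg_left hCS (by positivity)
  have h6 : R ^ 4 ≤ r ^ 4 := by nlinarith [h4, h5]
  have hp : (0:ℝ) < R ^ 2 + r ^ 2 := by positivity
  have h7 : R ^ 2 ≤ r ^ 2 := by nlinarith [h6, hp]
  nlinarith [h7, hR, hr]
end
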